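/- Let p be an odd prime and G a finite p-group such that G/η(G) is powerful. Then G/η(G) is elementary abelian (abelian of exponent dividing p). -/

import Mathlib

/-- The subgroup generated by `p`-th powers of elements of `N`. -/
def pPow {G : Type*} [Group G] (p : ℕ) (N : Subgroup G) : Subgroup G :=
  Subgroup.closure ((fun x => x ^ p) '' (N : Set G))

theorem pPow_normal {G : Type*} [Group G] (p : ℕ) {N : Subgroup G} (hN : N.Normal) :
    (pPow p N).Normal := by
  constructor
  intro x hx g
  have h : pPow p N ≤ Subgroup.comap (MulAut.conj g).toMonoidHom (pPow p N) := by
    rw [pPow, Subgroup.closure_le]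
    rintro - ⟨n, hn, rfl⟩
    have : (MulAut.conj g) (n ^ p) = (g * n * g⁻¹) ^ p := by
      simp [MulAut.conj_apply, conj_pow]
    refine Subgroup.mem_comap.2 ?_
    show (MulAut.conj g) (n ^ p) ∈ _
    rw [this]
    exact Subgroup.subset_closure ⟨g * n * g⁻¹, hN.conj_mem n hn g, rfl⟩
  simpa using h hx

theorem normal_sSup {G : Type*} [Group G] {S : Set (Subgroup G)}
    (hS : ∀ N ∈ S, N.Normal) : (sSup S).Normal := by
  constructor
  intro x hx g
  have h : sSup S ≤ Subgroup.comap (MulAut.conj g).toMonoidHom (sSup S) := by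
    refine sSup_le fun N hN => le_trans ?_ (Subgroup.comap_mono (le_sSup hN))
    intro n hn
    exact Subgroup.mem_comap.2 (by simpa using (hS N hN).conj_mem n hn g)
  simpa using h hx

/-- The upper η-series: `η₀ = 1`, and `η_{i+1}/η_i = η(G/η_i)` is the product of all
powerfully embedded subgroups of `G/η_i`. -/
def etaUp (p : ℕ) (G : Type*) [Group G] : ℕ → Subgroup G
  | 0 => ⊥
  | i + 1 => sSup {N : Subgroup G | N.Normal ∧ ⁅N, (⊤ : Subgroup G)⁆ ≤ pPow p N ⊔ etaUp p G i}

instance etaUp_normal (p : ℕ) (G : Type*) [Group G] (i : ℕ) : (etaUp p G i).Normal := by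
  cases i with
  | zero => show (⊥ : Subgroup G).Normal; infer_instance
  | succ i => exact normal_sSup fun N hN => hN.1

/-- The powerful class of `G`. -/
noncomputable def pwc (p : ℕ) (G : Type*) [Group G] : ℕ := sInf {k | etaUp p G k = ⊤}

/-- Iterated commutator `[N, G, G, ..., G]` with `i` copies of `G`. -/
def itComm {G : Type*} [Group G] (N : Subgroup G) : ℕ → Subgroup G
  | 0 => N
  | i + 1 => ⁅itComm N i, (⊤ : Subgroup G)⁆

/-- `N` is PF-embedded in `G`: it admits a potent filtration. -/
def PFEmbedded {G : Type*} [Group G] (p : ℕ) (N : Subgroup G) : Prop :=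
  ∃ (s : ℕ) (M : ℕ → Subgroup G), M 0 = N ∧ M s = ⊥ ∧
    (∀ i, M (i + 1) ≤ M i) ∧ (∀ i, (M i).Normal) ∧
    (∀ i, ⁅M i, (⊤ : Subgroup G)⁆ ≤ M (i + 1)) ∧
    (∀ i, itComm (M i) (p - 1) ≤ pPow p (M (i + 1)))

open scoped commutatorElement

section PowerfulAux

open Subgroup

universe u

variable {G : Type*} [Group G]

theorem pPow_mono (p : ℕ) {N M : Subgroup G} (h : N ≤ M) : pPow p N ≤ pPow p M :=
  Subgroup.closure_mono (Set.image_mono h)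

theorem pow_mem_pPow (p : ℕ) {N : Subgroup G} {n : G} (hn : n ∈ N) : n ^ p ∈ pPow p N :=
  Subgroup.subset_closure ⟨n, hn, rfl⟩

theorem map_pPow {G' : Type*} [Group G'] (f : G →* G') (p : ℕ) (N : Subgroup G) :
    (pPow p N).map f = pPow p (N.map f) := by
  rw [pPow, pPow, MonoidHom.map_closure]
  congr 1
  ext y
  constructor
  · rintro ⟨-, ⟨n, hn, rfl⟩, rfl⟩
    exact ⟨f n, ⟨n, hn, rfl⟩, (map_pow f n p).symm⟩
  · rintro ⟨-, ⟨n, hn, rfl⟩, rfl⟩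
    exact ⟨n ^ p, ⟨n, hn, rfl⟩, map_pow f n p⟩

theorem comm_mul_left_aux (a b g : G) : ⁅a * b, g⁆ = a * ⁅b, g⁆ * a⁻¹ * ⁅a, g⁆ := by
  simp only [commutatorElement_def]
  group

/-- `etaUp p G 1` as a `sSup`. -/
theorem etaUp_one_def (p : ℕ) (G : Type*) [Group G] :
    etaUp p G 1 = sSup {N : Subgroup G | N.Normal ∧ ⁅N, (⊤ : Subgroup G)⁆ ≤ pPow p N ⊔ ⊥} :=
  rfl

theorem le_etaUp_one {p : ℕ} {N : Subgroup G} (hN : N.Normal)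
    (h : ⁅N, (⊤ : Subgroup G)⁆ ≤ pPow p N) : N ≤ etaUp p G 1 := by
  rw [etaUp_one_def]
  exact le_sSup ⟨hN, h.trans le_sup_left⟩

/-- `η(G)` is powerfully embedded in `G`. -/
theorem etaUp_one_pe (p : ℕ) (G : Type*) [Group G] :
    ⁅etaUp p G 1, (⊤ : Subgroup G)⁆ ≤ pPow p (etaUp p G 1) := by
  have hXn : (pPow p (etaUp p G 1)).Normal := pPow_normal p (etaUp_normal p G 1)
  rw [Subgroup.commutator_le]
  intro n hn g _
  rw [etaUp_one_def, sSup_eq_iSup'] at hn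
  refine Subgroup.iSup_induction _ (C := fun m => ∀ u : G, ⁅m, u⁆ ∈ pPow p (etaUp p G 1))
    hn ?_ ?_ ?_ g
  · rintro ⟨N, hNn, hNpe⟩ x hx u
    have h1 : ⁅x, u⁆ ∈ pPow p N ⊔ ⊥ :=
      hNpe (Subgroup.commutator_mem_commutator hx (Subgroup.mem_top u))
    rw [sup_bot_eq] at h1
    exact pPow_mono p (le_sSup (by exact ⟨hNn, hNpe⟩)) h1
  · intro u
    simpa using (pPow p (etaUp p G 1)).one_mem
  · intro x y hx hy u
    rw [comm_mul_left_aux]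
    exact mul_mem (hXn.conj_mem _ (hy u) x) (hx u)

theorem etaUp_map_le {p : ℕ} {G G' : Type*} [Group G] [Group G'] (f : G →* G')
    (hf : Function.Surjective f) : (etaUp p G 1).map f ≤ etaUp p G' 1 := by
  rw [etaUp_one_def, etaUp_one_def, (Subgroup.gc_map_comap f).l_sSup]
  refine iSup_le fun N => iSup_le fun hN => le_sSup ?_
  refine ⟨hN.1.map f hf, ?_⟩
  have h := Subgroup.map_mono (f := f) hN.2
  rw [Subgroup.map_commutator, Subgroup.map_top_of_surjective f hf, Subgroup.map_sup,
    map_pPow, Subgroup.map_bot] at h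
  exact h

/-- Telescoped commutator formula: `⁅g^k, x⁆ = ⁅g,⁅g,x⁆⁆^(k choose 2) * ⁅g,x⁆^k`,
valid whenever `⁅g,⁅g,x⁆⁆` is central. -/
theorem comm_pow_eq (g x : G) (hw : ∀ u : G, ⁅g, ⁅g, x⁆⁆ * u = u * ⁅g, ⁅g, x⁆⁆) (k : ℕ) :
    ⁅g ^ k, x⁆ = ⁅g, ⁅g, x⁆⁆ ^ (k.choose 2) * ⁅g, x⁆ ^ k := by
  induction k with
  | zero => simp
  | succ k ih =>
    have h1 : ⁅g ^ (k + 1), x⁆ = g * ⁅g ^ k, x⁆ * g⁻¹ * ⁅g, x⁆ := by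
      rw [pow_succ']
      exact comm_mul_left_aux g (g ^ k) x
    have hconj : g * ⁅g, x⁆ * g⁻¹ = ⁅g, ⁅g, x⁆⁆ * ⁅g, x⁆ := by
      simp only [commutatorElement_def]
      group
    have hcw : Commute (⁅g, ⁅g, x⁆⁆) (⁅g, x⁆) := hw _
    have hgw : Commute g (⁅g, ⁅g, x⁆⁆) := (hw g).symm
    rw [h1, ih]
    calc g * (⁅g, ⁅g, x⁆⁆ ^ k.choose 2 * ⁅g, x⁆ ^ k) * g⁻¹ * ⁅g, x⁆
        = (g * ⁅g, ⁅g, x⁆⁆ ^ k.choose 2 * g⁻¹) * (g * ⁅g, x⁆ ^ k * g⁻¹) * ⁅g, x⁆ := by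
          group
      _ = ⁅g, ⁅g, x⁆⁆ ^ k.choose 2 * (g * ⁅g, x⁆ * g⁻¹) ^ k * ⁅g, x⁆ := by
          rw [conj_pow, (hgw.pow_right (k.choose 2)).eq]
          group
      _ = ⁅g, ⁅g, x⁆⁆ ^ k.choose 2 * (⁅g, ⁅g, x⁆⁆ ^ k * ⁅g, x⁆ ^ k) * ⁅g, x⁆ := by
          rw [hconj, hcw.mul_pow]
      _ = ⁅g, ⁅g, x⁆⁆ ^ ((k + 1).choose 2) * ⁅g, x⁆ ^ (k + 1) := by
          rw [Nat.choose_succ_succ, Nat.choose_one_right, pow_add, pow_succ]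
          group

end PowerfulAux

section StarMain

open Subgroup

universe u

/-- Key lemma: if `A` is central, `[G,G] ≤ G^p A`, and all elements of `G^p A` have
order dividing `p`, then `G^p A` is central (for `p` an odd prime). -/
theorem star_lemma {p : ℕ} (hp : p.Prime) (hodd : Odd p) (n : ℕ) :
    ∀ (G : Type u) [Group G] [Finite G], Nat.card G ≤ n → IsPGroup p G →
    ∀ A : Subgroup G, A ≤ Subgroup.center G →
    ⁅(⊤ : Subgroup G), (⊤ : Subgroup G)⁆ ≤ pPow p ⊤ ⊔ A →
    (∀ x ∈ pPow p (⊤ : Subgroup G) ⊔ A, x ^ p = 1) →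
    pPow p (⊤ : Subgroup G) ⊔ A ≤ Subgroup.center G := by
  induction n with
  | zero =>
    intro G _ _ hcard _
    have := Nat.card_pos (α := G)
    omega
  | succ n ih =>
    intro G _ _ hcard hpG A hA h1 h2
    by_cases hg4 : (⊤ : Subgroup G).lowerCentralSeries 3 = ⊥
    · -- direct computation in (nilpotency) class ≤ 3
      have hcenter : ∀ g z : G, ⁅g ^ p, z⁆ = 1 := by
        intro g z
        have hc1 : ⁅g, z⁆ ∈ (⊤ : Subgroup G).lowerCentralSeries 1 := by
          rw [Subgroup.lowerCentralSeries_one]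
          exact Subgroup.commutator_mem_commutator (Subgroup.mem_top g) (Subgroup.mem_top z)
        have hw2 : ⁅g, ⁅g, z⁆⁆ ∈ (⊤ : Subgroup G).lowerCentralSeries 2 := by
          have hmem : ⁅⁅g, z⁆, g⁆ ∈ ⁅(⊤ : Subgroup G).lowerCentralSeries 1, (⊤ : Subgroup G)⁆ :=
            Subgroup.commutator_mem_commutator hc1 (Subgroup.mem_top g)
          have h2' : (⊤ : Subgroup G).lowerCentralSeries 2 = ⁅(⊤ : Subgroup G).lowerCentralSeries 1, (⊤ : Subgroup G)⁆ := rfl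
          rw [h2', ← commutatorElement_inv]
          exact inv_mem hmem
        have hwc : ∀ u : G, ⁅g, ⁅g, z⁆⁆ * u = u * ⁅g, ⁅g, z⁆⁆ := by
          intro u
          have hmem : ⁅⁅g, ⁅g, z⁆⁆, u⁆ ∈ (⊤ : Subgroup G).lowerCentralSeries 3 := by
            have h3' : (⊤ : Subgroup G).lowerCentralSeries 3 = ⁅(⊤ : Subgroup G).lowerCentralSeries 2, (⊤ : Subgroup G)⁆ := rfl
            rw [h3']
            exact Subgroup.commutator_mem_commutator hw2 (Subgroup.mem_top u)
          rw [hg4, Subgroup.mem_bot] at hmem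
          exact commutatorElement_eq_one_iff_mul_comm.mp hmem
        have hcH : ⁅g, z⁆ ∈ pPow p (⊤ : Subgroup G) ⊔ A :=
          h1 (Subgroup.commutator_mem_commutator (Subgroup.mem_top g) (Subgroup.mem_top z))
        have hwH : ⁅g, ⁅g, z⁆⁆ ∈ pPow p (⊤ : Subgroup G) ⊔ A :=
          h1 (Subgroup.commutator_mem_commutator (Subgroup.mem_top g) (Subgroup.mem_top ⁅g, z⁆))
        have hcp : ⁅g, z⁆ ^ p = 1 := h2 _ hcH
        have hwp : ⁅g, ⁅g, z⁆⁆ ^ p = 1 := h2 _ hwH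
        obtain ⟨m, hm⟩ : Even (p - 1) := Nat.Odd.sub_odd hodd odd_one
        have hchoose : p.choose 2 = p * m := by
          rw [Nat.choose_two_right, hm]
          rw [show p * (m + m) = p * m * 2 by ring]
          exact Nat.mul_div_cancel _ (by norm_num)
        rw [comm_pow_eq g z hwc p, hcp, mul_one, hchoose, pow_mul, hwp, one_pow]
      refine sup_le ?_ hA
      rw [pPow, Subgroup.closure_le]
      rintro - ⟨g, -, rfl⟩
      rw [SetLike.mem_coe, Subgroup.mem_center_iff]
      intro u
      exact (commutatorElement_eq_one_iff_mul_comm.mp (hcenter g u)).symm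
    · -- quotient by `γ₄ ≠ ⊥` and derive a contradiction
      exfalso
      set Z := (⊤ : Subgroup G).lowerCentralSeries 3 with hZdef
      let π := QuotientGroup.mk' Z
      have hsurj : Function.Surjective π := QuotientGroup.mk'_surjective Z
      have htop : Subgroup.map π ⊤ = (⊤ : Subgroup (G ⧸ Z)) :=
        Subgroup.map_top_of_surjective π hsurj
      have hlt : Nat.card (G ⧸ Z) < Nat.card G := by
        have hmul := Subgroup.card_eq_card_quotient_mul_card_subgroup Z
        have h1' : 1 < Nat.card Z := (Subgroup.one_lt_card_iff_ne_bot Z).mpr hg4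
        have h0 : 0 < Nat.card (G ⧸ Z) := Nat.card_pos
        nlinarith
      have hmapsup : Subgroup.map π (pPow p ⊤ ⊔ A) =
          pPow p (⊤ : Subgroup (G ⧸ Z)) ⊔ A.map π := by
        rw [Subgroup.map_sup, map_pPow, htop]
      have hA' : A.map π ≤ Subgroup.center (G ⧸ Z) := by
        rintro - ⟨a, ha, rfl⟩
        rw [Subgroup.mem_center_iff]
        intro q
        obtain ⟨u, rfl⟩ := hsurj q
        rw [← map_mul, ← map_mul]
        congr 1
        exact Subgroup.mem_center_iff.mp (hA ha) u
      have h1' : ⁅(⊤ : Subgroup (G ⧸ Z)), (⊤ : Subgroup (G ⧸ Z))⁆ ≤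
          pPow p ⊤ ⊔ A.map π := by
        have hcommeq : ⁅(⊤ : Subgroup (G ⧸ Z)), (⊤ : Subgroup (G ⧸ Z))⁆ =
            Subgroup.map π ⁅(⊤ : Subgroup G), (⊤ : Subgroup G)⁆ := by
          rw [Subgroup.map_commutator, htop]
        rw [← hmapsup, hcommeq]
        exact Subgroup.map_mono h1
      have h2' : ∀ x ∈ pPow p (⊤ : Subgroup (G ⧸ Z)) ⊔ A.map π, x ^ p = 1 := by
        rw [← hmapsup]
        rintro - ⟨h, hh, rfl⟩
        rw [← map_pow, h2 h hh, map_one]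
      have hconc := ih (G ⧸ Z) (by omega) (hpG.to_quotient Z) (A.map π) hA' h1' h2'
      -- hence `[G^p A, G] ≤ Z = γ₄`
      have hcomm : ⁅pPow p (⊤ : Subgroup G) ⊔ A, (⊤ : Subgroup G)⁆ ≤ Z := by
        rw [Subgroup.commutator_le]
        intro h hh u _
        have hmem : π h ∈ Subgroup.center (G ⧸ Z) := by
          refine hconc ?_
          rw [← hmapsup]
          exact ⟨h, hh, rfl⟩
        have : π ⁅h, u⁆ = 1 := by
          rw [map_commutatorElement]
          exact commutatorElement_eq_one_iff_mul_comm.mpr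
            (Subgroup.mem_center_iff.mp hmem (π u)).symm
        have hker : ⁅h, u⁆ ∈ π.ker := this
        rwa [QuotientGroup.ker_mk'] at hker
      have hle23 : (⊤ : Subgroup G).lowerCentralSeries 2 ≤ (⊤ : Subgroup G).lowerCentralSeries 3 := by
        have e2 : (⊤ : Subgroup G).lowerCentralSeries 2 = ⁅(⊤ : Subgroup G).lowerCentralSeries 1, (⊤ : Subgroup G)⁆ := rfl
        rw [e2, Subgroup.lowerCentralSeries_one]
        refine le_trans (Subgroup.commutator_mono ?_ le_rfl) hcomm
        exact h1
      have heq : (⊤ : Subgroup G).lowerCentralSeries 2 = (⊤ : Subgroup G).lowerCentralSeries 3 :=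
        le_antisymm hle23 (Subgroup.lowerCentralSeries_antitone ⊤ (by omega))
      have hstab : ∀ k, (⊤ : Subgroup G).lowerCentralSeries (2 + k) = (⊤ : Subgroup G).lowerCentralSeries 2 := by
        intro k
        induction k with
        | zero => rfl
        | succ k ihk =>
          have e : (⊤ : Subgroup G).lowerCentralSeries (2 + (k + 1)) =
              ⁅(⊤ : Subgroup G).lowerCentralSeries (2 + k), (⊤ : Subgroup G)⁆ := rfl
          rw [e, ihk]
          exact heq.symm
      haveI : Fact p.Prime := ⟨hp⟩
      have hnil : Group.IsNilpotent G := hpG.isNilpotent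
      obtain ⟨k0, hk0⟩ := Subgroup.nilpotent_iff_lowerCentralSeries.mp hnil
      have hbot : (⊤ : Subgroup G).lowerCentralSeries 2 = ⊥ := by
        rw [← hstab k0]
        exact le_bot_iff.mp (hk0 ▸ Subgroup.lowerCentralSeries_antitone ⊤ (by omega))
      exact hg4 (le_bot_iff.mp (hbot ▸ Subgroup.lowerCentralSeries_antitone ⊤ (by omega : 2 ≤ 3)))

end StarMain

section MainLemma

open Subgroup

universe u

theorem eta_main_lemma {p : ℕ} (hp : p.Prime) (hodd : Odd p) (n : ℕ) :
    ∀ (G : Type u) [Group G] [Finite G], Nat.card G ≤ n → IsPGroup p G →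
    ⁅(⊤ : Subgroup G), (⊤ : Subgroup G)⁆ ≤ pPow p ⊤ ⊔ etaUp p G 1 →
    pPow p (⊤ : Subgroup G) ⊔ ⁅(⊤ : Subgroup G), (⊤ : Subgroup G)⁆ ≤ etaUp p G 1 := by
  induction n with
  | zero =>
    intro G _ _ hcard
    have := Nat.card_pos (α := G)
    omega
  | succ n ih =>
    intro G _ _ hcard hpG h1
    haveI htopn : (pPow p (⊤ : Subgroup G)).Normal := pPow_normal p inferInstance
    set H := pPow p (⊤ : Subgroup G) ⊔ etaUp p G 1 with hHdef
    haveI hHn : H.Normal := Subgroup.sup_normal _ _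
    by_cases hZ : pPow p H = ⊥
    · -- base case: `H` has exponent `p`, apply the star lemma with `A = η(G)`
      have h2 : ∀ x ∈ H, x ^ p = 1 := by
        intro x hx
        have := pow_mem_pPow p hx
        rwa [hZ, Subgroup.mem_bot] at this
      have hAc : etaUp p G 1 ≤ Subgroup.center G := by
        intro a ha
        rw [Subgroup.mem_center_iff]
        intro u
        have hmem : ⁅a, u⁆ ∈ pPow p (etaUp p G 1) :=
          etaUp_one_pe p G (Subgroup.commutator_mem_commutator ha (Subgroup.mem_top u))
        have hmem2 : ⁅a, u⁆ ∈ pPow p H := pPow_mono p le_sup_right hmem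
        rw [hZ, Subgroup.mem_bot] at hmem2
        exact (commutatorElement_eq_one_iff_mul_comm.mp hmem2).symm
      have hcent : H ≤ Subgroup.center G :=
        star_lemma hp hodd (Nat.card G) G le_rfl hpG (etaUp p G 1) hAc h1 h2
      have hpe : ⁅H, (⊤ : Subgroup G)⁆ ≤ pPow p H := by
        rw [Subgroup.commutator_le]
        intro h hh u _
        have hcen := Subgroup.mem_center_iff.mp (hcent hh) u
        rw [commutatorElement_eq_one_iff_mul_comm.mpr hcen.symm]
        exact one_mem _
      have hHle : H ≤ etaUp p G 1 := le_etaUp_one hHn hpe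
      have hple : pPow p (⊤ : Subgroup G) ≤ etaUp p G 1 := le_sup_left.trans hHle
      exact sup_le hple (h1.trans (sup_le hple le_rfl))
    · -- inductive step: quotient by `Z = H^p ≠ ⊥`
      set Z := pPow p H with hZdef
      haveI hZn : Z.Normal := pPow_normal p hHn
      let π := QuotientGroup.mk' Z
      have hsurj : Function.Surjective π := QuotientGroup.mk'_surjective Z
      have htop : Subgroup.map π ⊤ = (⊤ : Subgroup (G ⧸ Z)) :=
        Subgroup.map_top_of_surjective π hsurj
      have hlt : Nat.card (G ⧸ Z) < Nat.card G := by
        have hmul := Subgroup.card_eq_card_quotient_mul_card_subgroup Z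
        have h1' : 1 < Nat.card Z := (Subgroup.one_lt_card_iff_ne_bot Z).mpr hZ
        have h0 : 0 < Nat.card (G ⧸ Z) := Nat.card_pos
        nlinarith
      have hQ1 : ⁅(⊤ : Subgroup (G ⧸ Z)), (⊤ : Subgroup (G ⧸ Z))⁆ ≤
          pPow p ⊤ ⊔ etaUp p (G ⧸ Z) 1 := by
        have hcommeq : ⁅(⊤ : Subgroup (G ⧸ Z)), (⊤ : Subgroup (G ⧸ Z))⁆ =
            Subgroup.map π ⁅(⊤ : Subgroup G), (⊤ : Subgroup G)⁆ := by
          rw [Subgroup.map_commutator, htop]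
        rw [hcommeq]
        refine le_trans (Subgroup.map_mono h1) ?_
        rw [Subgroup.map_sup, map_pPow, htop]
        exact sup_le le_sup_left ((etaUp_map_le π hsurj).trans le_sup_right)
      have hconc := ih (G ⧸ Z) (by omega) (hpG.to_quotient Z) hQ1
      have hpowQ : pPow p (⊤ : Subgroup (G ⧸ Z)) ≤ etaUp p (G ⧸ Z) 1 :=
        le_sup_left.trans hconc
      set N := Subgroup.comap π (etaUp p (G ⧸ Z) 1) with hNdef
      haveI hNn : N.Normal := (etaUp_normal p (G ⧸ Z) 1).comap π
      have hHN : H ≤ N := by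
        rw [hNdef, ← Subgroup.map_le_iff_le_comap, hHdef, Subgroup.map_sup, map_pPow, htop]
        exact sup_le hpowQ (etaUp_map_le π hsurj)
      have hmapN : Subgroup.map π N = etaUp p (G ⧸ Z) 1 :=
        Subgroup.map_comap_eq_self_of_surjective hsurj _
      have hNpe : ⁅N, (⊤ : Subgroup G)⁆ ≤ pPow p N := by
        rw [Subgroup.commutator_le]
        intro m hm u _
        have hmem : ⁅π m, π u⁆ ∈ pPow p (etaUp p (G ⧸ Z) 1) :=
          etaUp_one_pe p _ (Subgroup.commutator_mem_commutator hm (Subgroup.mem_top (π u)))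
        rw [← hmapN, ← map_pPow] at hmem
        have hmem2 : ⁅m, u⁆ ∈ Subgroup.comap π (Subgroup.map π (pPow p N)) := by
          rw [Subgroup.mem_comap, map_commutatorElement]
          exact hmem
        rw [Subgroup.comap_map_eq, QuotientGroup.ker_mk'] at hmem2
        have hZle : Z ≤ pPow p N := hZdef ▸ pPow_mono p hHN
        rwa [sup_of_le_left hZle] at hmem2
      have hNle : N ≤ etaUp p G 1 := le_etaUp_one hNn hNpe
      have hple : pPow p (⊤ : Subgroup G) ≤ etaUp p G 1 :=
        (le_sup_left.trans hHN).trans hNle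
      exact sup_le hple (h1.trans (sup_le hple le_rfl))

end MainLemma


/-- if `G/η(G)` is powerful, then `G/η(G)` is elementary abelian. -/
theorem quotient_eta_powerful_elementary_abelian {p : ℕ} (hp : p.Prime) (hodd : Odd p)
    {G : Type*} [Group G] [Finite G] (hG : IsPGroup p G)
    (hpow : ⁅(⊤ : Subgroup (G ⧸ etaUp p G 1)), (⊤ : Subgroup (G ⧸ etaUp p G 1))⁆ ≤
      pPow p (⊤ : Subgroup (G ⧸ etaUp p G 1))) :
    (∀ x y : G ⧸ etaUp p G 1, x * y = y * x) ∧ ∀ x : G ⧸ etaUp p G 1, x ^ p = 1 := by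
  let π := QuotientGroup.mk' (etaUp p G 1)
  have hsurj : Function.Surjective π := QuotientGroup.mk'_surjective _
  have htop : Subgroup.map π ⊤ = (⊤ : Subgroup (G ⧸ etaUp p G 1)) :=
    Subgroup.map_top_of_surjective π hsurj
  have h1 : ⁅(⊤ : Subgroup G), (⊤ : Subgroup G)⁆ ≤ pPow p ⊤ ⊔ etaUp p G 1 := by
    rw [Subgroup.commutator_le]
    intro a _ b _
    have hmem : ⁅π a, π b⁆ ∈ pPow p (⊤ : Subgroup (G ⧸ etaUp p G 1)) :=
      hpow (Subgroup.commutator_mem_commutator (Subgroup.mem_top (π a)) (Subgroup.mem_top (π b)))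
    rw [← htop, ← map_pPow] at hmem
    have hmem2 : ⁅a, b⁆ ∈ Subgroup.comap π (Subgroup.map π (pPow p ⊤)) := by
      rw [Subgroup.mem_comap, map_commutatorElement]
      exact hmem
    rwa [Subgroup.comap_map_eq, QuotientGroup.ker_mk'] at hmem2
  have hmain := eta_main_lemma hp hodd (Nat.card G) G le_rfl hG h1
  constructor
  · intro x y
    obtain ⟨a, rfl⟩ := hsurj x
    obtain ⟨b, rfl⟩ := hsurj y
    have hmem : ⁅a, b⁆ ∈ etaUp p G 1 :=
      (le_sup_right.trans hmain)
        (Subgroup.commutator_mem_commutator (Subgroup.mem_top a) (Subgroup.mem_top b))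
    have hone : π ⁅a, b⁆ = 1 := (QuotientGroup.eq_one_iff _).mpr hmem
    rw [map_commutatorElement] at hone
    exact commutatorElement_eq_one_iff_mul_comm.mp hone
  · intro x
    obtain ⟨a, rfl⟩ := hsurj x
    have hmem : a ^ p ∈ etaUp p G 1 :=
      (le_sup_left.trans hmain) (pow_mem_pPow p (Subgroup.mem_top a))
    have hone : π (a ^ p) = 1 := (QuotientGroup.eq_one_iff _).mpr hmem
    rwa [map_pow] at hone
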